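/- For any container C (a rectangle [x_C, x_C+w_C) × [y_C, y_C+h_C) with integer coordinates) and any regular size [w,h], there is a unique smallest set of pairwise non-overlapping regular aligned containers, each of size ⪯ [w,h], whose union equals C (if any such set exists). Hence the container cutting function σ(C,[w,h]) is well-defined. -/

import Mathlib

/-- The half-open rectangular region `[x, x+w) × [y, y+h) ⊆ ℤ²`. -/
def Reg (x y w h : ℤ) : Set (ℤ × ℤ) :=
  Set.Ico x (x + w) ×ˢ Set.Ico y (y + h)

lemma mem_Reg {p : ℤ × ℤ} {x y w h : ℤ} :
    p ∈ Reg x y w h ↔ (x ≤ p.1 ∧ p.1 < x + w) ∧ (y ≤ p.2 ∧ p.2 < y + h) := by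
  simp [Reg, Set.mem_prod, Set.mem_Ico]

lemma Reg_nonempty {x y w h : ℤ} (hw : 0 < w) (hh : 0 < h) : (Reg x y w h).Nonempty :=
  ⟨(x, y), mem_Reg.2 ⟨⟨le_refl _, by omega⟩, ⟨le_refl _, by omega⟩⟩⟩

lemma Reg_empty_of_w {x y w h : ℤ} (hw : w ≤ 0) : Reg x y w h = ∅ := by
  ext p; simp [mem_Reg]; omega

lemma Reg_empty_of_h {x y w h : ℤ} (hh : h ≤ 0) : Reg x y w h = ∅ := by
  ext p; simp [mem_Reg]; omega

lemma Reg_subset {x y w h x' y' w' h' : ℤ} (h1 : x' ≤ x) (h2 : x + w ≤ x' + w')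
    (h3 : y' ≤ y) (h4 : y + h ≤ y' + h') : Reg x y w h ⊆ Reg x' y' w' h' := by
  intro p hp; rw [mem_Reg] at *; omega

/-- If `a ∣ d` and `-a < d` with `0 < a` then `0 ≤ d`. -/
lemma dvd_nonneg_of_gt_neg {a d : ℤ} (ha : 0 < a) (hd : a ∣ d) (h : -a < d) : 0 ≤ d := by
  by_contra hneg
  push_neg at hneg
  have : a ≤ -d := Int.le_of_dvd (by omega) (dvd_neg.2 hd)
  omega

/-- 1D: an aligned interval of length `a` meeting an aligned interval of
length `b` with `a ∣ b` is contained in it. -/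
lemma aligned_ico_subset {a b x y t : ℤ} (ha : 0 < a) (hab : a ∣ b)
    (hx : a ∣ x) (hy : b ∣ y)
    (ht1 : x ≤ t) (ht2 : t < x + a) (ht3 : y ≤ t) (ht4 : t < y + b) :
    y ≤ x ∧ x + a ≤ y + b := by
  have hay : a ∣ y := dvd_trans hab hy
  constructor
  · -- y ≤ x : a ∣ (x - y), x - y > -a
    have h1 : a ∣ (x - y) := dvd_sub hx hay
    have := dvd_nonneg_of_gt_neg ha h1 (by omega)
    omega
  · -- x + a ≤ y + b : a ∣ (y + b - x), and y + b - x > 0 so ≥ a... need > a - a?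
    have h2 : a ∣ (y + b - x) := dvd_sub (dvd_add hay hab) hx
    have h3 : 0 < y + b - x := by omega
    have := Int.le_of_dvd h3 h2
    omega

/-- 2D: a regular aligned region meeting a coarser regular aligned region is inside it. -/
lemma Reg_subset_of_meet {x y a bb X Y A B : ℤ} (ha : 0 < a) (hb : 0 < bb)
    (hA : a ∣ A) (hB : bb ∣ B) (hx : a ∣ x) (hy : bb ∣ y) (hX : A ∣ X) (hY : B ∣ Y)
    (hmeet : (Reg x y a bb ∩ Reg X Y A B).Nonempty) : Reg x y a bb ⊆ Reg X Y A B := by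
  obtain ⟨p, hp1, hp2⟩ := hmeet
  rw [mem_Reg] at hp1 hp2
  obtain ⟨h1, h2⟩ := aligned_ico_subset ha hA hx hX hp1.1.1 hp1.1.2 hp2.1.1 hp2.1.2
  obtain ⟨h3, h4⟩ := aligned_ico_subset hb hB hy hY hp1.2.1 hp1.2.2 hp2.2.1 hp2.2.2
  exact Reg_subset h1 h2 h3 h4

lemma pow_dvd_of_le {q : ℕ} (hq : 1 < q) {i a : ℕ} (h : (q:ℤ)^i ≤ (q:ℤ)^a) :
    (q:ℤ)^i ∣ (q:ℤ)^a := by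
  have hq' : (1:ℤ) < (q:ℤ) := by exact_mod_cast hq
  have : i ≤ a := by
    by_contra hia
    push_neg at hia
    exact absurd h (not_le.2 (pow_lt_pow_right₀ hq' hia))
  exact pow_dvd_pow _ this

lemma pow_pos' {q : ℕ} (hq : 1 < q) (i : ℕ) : (0:ℤ) < (q:ℤ)^i :=
  pow_pos (by exact_mod_cast Nat.lt_of_lt_of_le Nat.zero_lt_one hq.le) i

/-- `GoodCut q1 q2 w h C S` : `S` is a finite set of pairwise non-overlapping
regular aligned containers, each of size `⪯ [w,h]`, whose union is `C`. -/
def GoodCut (q1 q2 : ℕ) (w h : ℤ) (C : Set (ℤ × ℤ)) (S : Set (Set (ℤ × ℤ))) : Prop :=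
  S.Finite ∧
  (∀ R ∈ S, ∃ (x y a bb : ℤ) (i j : ℕ),
      R = Reg x y a bb ∧ a = (q1 : ℤ) ^ i ∧ bb = (q2 : ℤ) ^ j ∧
      a ∣ x ∧ bb ∣ y ∧ a ≤ w ∧ bb ≤ h) ∧
  (∀ R1 ∈ S, ∀ R2 ∈ S, R1 ≠ R2 → R1 ∩ R2 = ∅) ∧
  ⋃₀ S = C

/-- Any region of a good cut that meets a full-size aligned cell lies inside it. -/
lemma mem_cut_subset_cell {q1 q2 : ℕ} (hq1 : 1 < q1) (hq2 : 1 < q2) {a b : ℕ}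
    {C : Set (ℤ × ℤ)} {S : Set (Set (ℤ × ℤ))}
    (hS : GoodCut q1 q2 ((q1:ℤ)^a) ((q2:ℤ)^b) C S)
    {X Y : ℤ} (hX : (q1:ℤ)^a ∣ X) (hY : (q2:ℤ)^b ∣ Y)
    {R : Set (ℤ × ℤ)} (hR : R ∈ S)
    (hmeet : (R ∩ Reg X Y ((q1:ℤ)^a) ((q2:ℤ)^b)).Nonempty) :
    R ⊆ Reg X Y ((q1:ℤ)^a) ((q2:ℤ)^b) := by
  obtain ⟨x, y, aa, bb, i, j, hReq, hai, hbj, hax, hby, haw, hbh⟩ := hS.2.1 R hR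
  subst hReq hai hbj
  exact Reg_subset_of_meet (pow_pos' hq1 i) (pow_pos' hq2 j)
    (pow_dvd_of_le hq1 haw) (pow_dvd_of_le hq2 hbh) hax hby hX hY hmeet

/-- A full-size aligned cell inside `C` belongs to every minimal good cut. -/
lemma fullcell_mem {q1 q2 : ℕ} (hq1 : 1 < q1) (hq2 : 1 < q2) {a b : ℕ}
    {C : Set (ℤ × ℤ)} {S : Set (Set (ℤ × ℤ))}
    (hS : GoodCut q1 q2 ((q1:ℤ)^a) ((q2:ℤ)^b) C S)
    (hmin : ∀ T, GoodCut q1 q2 ((q1:ℤ)^a) ((q2:ℤ)^b) C T → S.ncard ≤ T.ncard)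
    {X Y : ℤ} (hX : (q1:ℤ)^a ∣ X) (hY : (q2:ℤ)^b ∣ Y)
    (hQC : Reg X Y ((q1:ℤ)^a) ((q2:ℤ)^b) ⊆ C) :
    Reg X Y ((q1:ℤ)^a) ((q2:ℤ)^b) ∈ S := by
  set w : ℤ := (q1:ℤ)^a with hw
  set h : ℤ := (q2:ℤ)^b with hh
  set Q : Set (ℤ × ℤ) := Reg X Y w h with hQdef
  by_contra hQ
  set K : Set (Set (ℤ × ℤ)) := {R ∈ S | R ⊆ Q} with hK
  have hKS : K ⊆ S := fun R hR => hR.1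
  have hKfin : K.Finite := hS.1.subset hKS
  have habs : ∀ R ∈ S, (R ∩ Q).Nonempty → R ⊆ Q := fun R hR hm =>
    mem_cut_subset_cell hq1 hq2 hS hX hY hR hm
  have hUK : ⋃₀ K = Q := by
    apply Set.Subset.antisymm
    · exact Set.sUnion_subset fun R hR => hR.2
    · intro p hp
      have hpC : p ∈ C := hQC hp
      rw [← hS.2.2.2] at hpC
      obtain ⟨R, hRS, hpR⟩ := hpC
      exact ⟨R, ⟨hRS, habs R hRS ⟨p, hpR, hp⟩⟩, hpR⟩
  have hQne : Q.Nonempty := Reg_nonempty (pow_pos' hq1 a) (pow_pos' hq2 b)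
  have hKne : K.Nonempty := by
    obtain ⟨p, hp⟩ := hQne
    have : p ∈ ⋃₀ K := hUK.symm ▸ hp
    obtain ⟨R, hR, _⟩ := this
    exact ⟨R, hR⟩
  have hK2 : 2 ≤ K.ncard := by
    rcases Nat.lt_or_ge K.ncard 2 with hlt | hge
    · interval_cases hc : K.ncard
      · exact absurd (Set.ncard_eq_zero hKfin |>.1 hc) (Set.nonempty_iff_ne_empty.1 hKne)
      · obtain ⟨R, hRK⟩ := Set.ncard_eq_one.1 hc
        have : R = Q := by rw [← hUK, hRK, Set.sUnion_singleton]
        have hRS : R ∈ S := hKS (hRK ▸ rfl)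
        exact absurd (this ▸ hRS) hQ
    · exact hge
  set T : Set (Set (ℤ × ℤ)) := insert Q (S \ K) with hT
  have hTgood : GoodCut q1 q2 w h C T := by
    refine ⟨(hS.1.diff : (S \ K).Finite).insert Q, ?_, ?_, ?_⟩
    · rintro R (rfl | ⟨hRS, _⟩)
      · exact ⟨X, Y, w, h, a, b, rfl, rfl, rfl, hX, hY, le_refl _, le_refl _⟩
      · exact hS.2.1 R hRS
    · have hQside : ∀ R ∈ S \ K, Q ∩ R = ∅ := by
        rintro R ⟨hRS, hRK⟩
        by_contra hne
        have hne' : (Q ∩ R).Nonempty := Set.nonempty_iff_ne_empty.2 hne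
        exact hRK ⟨hRS, habs R hRS (by rwa [Set.inter_comm])⟩
      rintro R1 (rfl | h1) R2 (rfl | h2) hne
      · exact absurd rfl hne
      · exact hQside R2 h2
      · rw [Set.inter_comm]; exact hQside R1 h1
      · exact hS.2.2.1 R1 h1.1 R2 h2.1 hne
    · rw [Set.sUnion_insert]
      apply Set.Subset.antisymm
      · apply Set.union_subset hQC
        exact Set.sUnion_subset fun R hR => (hS.2.2.2) ▸ Set.subset_sUnion_of_mem hR.1
      · intro p hp
        rw [← hS.2.2.2] at hp
        obtain ⟨R, hRS, hpR⟩ := hp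
        by_cases hRK : R ∈ K
        · exact Or.inl (hRK.2 hpR)
        · exact Or.inr ⟨R, ⟨hRS, hRK⟩, hpR⟩
  have hcard : T.ncard < S.ncard := by
    have h1 : T.ncard ≤ (S \ K).ncard + 1 := Set.ncard_insert_le _ _
    have h2 : (S \ K).ncard = S.ncard - K.ncard := Set.ncard_diff hKS hKfin
    have h3 : K.ncard ≤ S.ncard := Set.ncard_le_ncard hKS hS.1
    omega
  exact absurd (hmin T hTgood) (not_le.2 hcard)

/-- floor multiple: `w * (t / w)`. -/
lemma mfl_spec {w : ℤ} (t : ℤ) (hw : 0 < w) :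
    w ∣ w * (t / w) ∧ w * (t / w) ≤ t ∧ t < w * (t / w) + w := by
  refine ⟨⟨t / w, rfl⟩, ?_, ?_⟩
  · have h1 := Int.emod_nonneg t (ne_of_gt hw)
    have h2 := Int.emod_def t w
    omega
  · have h1 := Int.emod_lt_of_pos t hw
    have h2 := Int.emod_def t w
    omega

lemma mfl_greatest {w z t : ℤ} (hw : 0 < w) (hz : w ∣ z) (h : z ≤ t) :
    z ≤ w * (t / w) := by
  obtain ⟨k, rfl⟩ := hz
  have : k ≤ t / w := Int.le_ediv_iff_mul_le hw |>.2 (by linarith [h])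
  exact mul_le_mul_of_nonneg_left this hw.le

/-- multiples of `w` that are strictly ordered differ by at least `w`. -/
lemma mult_gap {w z1 z2 : ℤ} (hw : 0 < w) (h1 : w ∣ z1) (h2 : w ∣ z2) (h : z1 < z2) :
    z1 + w ≤ z2 := by
  have hd : w ∣ z2 - z1 := dvd_sub h2 h1
  have := Int.le_of_dvd (by omega) hd
  omega

lemma goodcut_nonempty_regions {q1 q2 : ℕ} (hq1 : 1 < q1) (hq2 : 1 < q2)
    {w h : ℤ} {C : Set (ℤ × ℤ)} {S : Set (Set (ℤ × ℤ))}
    (hS : GoodCut q1 q2 w h C S) {R : Set (ℤ × ℤ)} (hR : R ∈ S) : R.Nonempty := by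
  obtain ⟨x, y, aa, bb, i, j, rfl, rfl, rfl, -⟩ := hS.2.1 R hR
  exact Reg_nonempty (pow_pos' hq1 i) (pow_pos' hq2 j)

lemma goodcut_empty {q1 q2 : ℕ} (hq1 : 1 < q1) (hq2 : 1 < q2)
    {w h : ℤ} {S : Set (Set (ℤ × ℤ))}
    (hS : GoodCut q1 q2 w h (∅ : Set (ℤ × ℤ)) S) : S = ∅ := by
  ext R
  simp only [Set.mem_empty_iff_false, iff_false]
  intro hR
  obtain ⟨p, hp⟩ := goodcut_nonempty_regions hq1 hq2 hS hR
  have : p ∈ ⋃₀ S := ⟨R, hR, hp⟩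
  rw [hS.2.2.2] at this
  exact this

lemma goodcut_region_subset {q1 q2 : ℕ} {w h : ℤ} {C : Set (ℤ × ℤ)}
    {S : Set (Set (ℤ × ℤ))} (hS : GoodCut q1 q2 w h C S)
    {R : Set (ℤ × ℤ)} (hR : R ∈ S) : R ⊆ C :=
  hS.2.2.2 ▸ Set.subset_sUnion_of_mem hR

lemma Reg_subset_bounds {x y aa bb X Y W H : ℤ} (ha : 0 < aa) (hb : 0 < bb)
    (hsub : Reg x y aa bb ⊆ Reg X Y W H) :
    X ≤ x ∧ x + aa ≤ X + W ∧ Y ≤ y ∧ y + bb ≤ Y + H := by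
  have c1 := hsub (show ((x, y) : ℤ × ℤ) ∈ Reg x y aa bb from
    mem_Reg.2 (by constructor <;> constructor <;> dsimp only <;> omega))
  have c2 := hsub (show ((x + aa - 1, y + bb - 1) : ℤ × ℤ) ∈ Reg x y aa bb from
    mem_Reg.2 (by constructor <;> constructor <;> dsimp only <;> omega))
  rw [mem_Reg] at c1 c2
  dsimp only at c1 c2
  omega

lemma goodcut_mono {q1 q2 : ℕ} {w h w' h' : ℤ} {C : Set (ℤ × ℤ)}
    {S : Set (Set (ℤ × ℤ))} (hS : GoodCut q1 q2 w h C S)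
    (hw : w ≤ w') (hh : h ≤ h') : GoodCut q1 q2 w' h' C S := by
  refine ⟨hS.1, ?_, hS.2.2.1, hS.2.2.2⟩
  intro R hR
  obtain ⟨x, y, aa, bb, i, j, h1, h2, h3, h4, h5, h6, h7⟩ := hS.2.1 R hR
  exact ⟨x, y, aa, bb, i, j, h1, h2, h3, h4, h5, le_trans h6 hw, le_trans h7 hh⟩

lemma goodcut_union {q1 q2 : ℕ} {w h : ℤ} {CA CB : Set (ℤ × ℤ)}
    {A B : Set (Set (ℤ × ℤ))} (hA : GoodCut q1 q2 w h CA A)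
    (hB : GoodCut q1 q2 w h CB B) (hd : CA ∩ CB = ∅) :
    GoodCut q1 q2 w h (CA ∪ CB) (A ∪ B) := by
  refine ⟨hA.1.union hB.1, ?_, ?_, ?_⟩
  · rintro R (hR | hR)
    exacts [hA.2.1 R hR, hB.2.1 R hR]
  · have cross : ∀ R1 ∈ A, ∀ R2 ∈ B, R1 ∩ R2 = ∅ := by
      intro R1 h1 R2 h2
      have s1 := goodcut_region_subset hA h1
      have s2 := goodcut_region_subset hB h2
      apply Set.eq_empty_of_subset_empty
      rw [← hd]
      exact Set.inter_subset_inter s1 s2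
    rintro R1 (h1 | h1) R2 (h2 | h2) hne
    · exact hA.2.2.1 R1 h1 R2 h2 hne
    · exact cross R1 h1 R2 h2
    · rw [Set.inter_comm]; exact cross R2 h2 R1 h1
    · exact hB.2.2.1 R1 h1 R2 h2 hne
  · rw [Set.sUnion_union, hA.2.2.2, hB.2.2.2]

/-- 1D trichotomy for an aligned subinterval of `[xC, xC+wC)` relative to the
multiples `x0 ≤ x1` of `w`. -/
lemma xtri {q : ℕ} (hq : 1 < q) {i a : ℕ} {x xC wC x0 x1 : ℤ}
    (hle : (q:ℤ)^i ≤ (q:ℤ)^a) (hdx : (q:ℤ)^i ∣ x)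
    (hx0 : (q:ℤ)^a ∣ x0) (hx1 : (q:ℤ)^a ∣ x1)
    (hx0g : ∀ z, (q:ℤ)^a ∣ z → xC ≤ z → x0 ≤ z)
    (hx1g : ∀ z, (q:ℤ)^a ∣ z → z ≤ xC + wC → z ≤ x1)
    (hl : xC ≤ x) (hr : x + (q:ℤ)^i ≤ xC + wC) :
    x + (q:ℤ)^i ≤ x0 ∨ x1 ≤ x ∨ (x0 ≤ x ∧ x + (q:ℤ)^i ≤ x1) := by
  set w : ℤ := (q:ℤ)^a with hw
  set aa : ℤ := (q:ℤ)^i with haa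
  have hwpos : 0 < w := pow_pos' hq a
  have hapos : 0 < aa := pow_pos' hq i
  have haw : aa ∣ w := pow_dvd_of_le hq hle
  set W : ℤ := w * (x / w) with hW
  obtain ⟨hWd, hWl, hWr⟩ := mfl_spec x hwpos
  rw [← hW] at hWd hWl hWr
  -- [x, x+aa) ⊆ [W, W+w)
  have hsub : W ≤ x ∧ x + aa ≤ W + w := by
    constructor
    · exact hWl
    · have h1 : aa ∣ (W + w - x) := dvd_sub (dvd_add (haw.trans hWd) haw) hdx
      have := Int.le_of_dvd (by omega) h1
      omega
  rcases le_or_gt (W + w) x0 with hc | hc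
  · exact Or.inl (by omega)
  · rcases le_or_gt x1 W with hc2 | hc2
    · exact Or.inr (Or.inl (by omega))
    · refine Or.inr (Or.inr ?_)
      have hWx0 : x0 ≤ W := by
        by_contra hcon
        push_neg at hcon
        have := mult_gap hwpos hWd hx0 hcon
        omega
      have hWx1 : W + w ≤ x1 := mult_gap hwpos hWd hx1 hc2
      omega

lemma le_of_pow_le' {q : ℕ} (hq : 1 < q) {i a : ℕ} (h : (q:ℤ)^i ≤ (q:ℤ)^a) : i ≤ a := by
  have hq' : (1:ℤ) < (q:ℤ) := by exact_mod_cast hq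
  by_contra hia
  push_neg at hia
  exact absurd h (not_le.2 (pow_lt_pow_right₀ hq' hia))

/-- restriction of a minimal cut to a part is minimal. -/
lemma strip_min {q1 q2 : ℕ} {w h : ℤ} {C Z : Set (ℤ × ℤ)} {S : Set (Set (ℤ × ℤ))}
    (hS : GoodCut q1 q2 w h C S)
    (hmin : ∀ T, GoodCut q1 q2 w h C T → S.ncard ≤ T.ncard)
    (hZC : Z ⊆ C)
    (hA : GoodCut q1 q2 w h (C \ Z) {R ∈ S | ¬ R ⊆ Z})
    (hB : GoodCut q1 q2 w h Z {R ∈ S | R ⊆ Z}) :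
    ∀ T, GoodCut q1 q2 w h Z T → ({R ∈ S | R ⊆ Z}).ncard ≤ T.ncard := by
  intro T hT
  have hdisj : (C \ Z) ∩ Z = ∅ := by
    ext p; simp only [Set.mem_inter_iff, Set.mem_diff, Set.mem_empty_iff_false, iff_false]
    tauto
  have hTT : GoodCut q1 q2 w h C ({R ∈ S | ¬ R ⊆ Z} ∪ T) := by
    have := goodcut_union hA hT hdisj
    rwa [Set.diff_union_of_subset hZC] at this
  have hcard := hmin _ hTT
  have h1 : ({R ∈ S | ¬ R ⊆ Z} ∪ T).ncard ≤ ({R ∈ S | ¬ R ⊆ Z}).ncard + T.ncard :=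
    Set.ncard_union_le _ _
  have hsplit : S = {R ∈ S | ¬ R ⊆ Z} ∪ {R ∈ S | R ⊆ Z} := by
    ext R; simp only [Set.mem_union, Set.mem_setOf_eq]; tauto
  have hdisj2 : Disjoint {R ∈ S | ¬ R ⊆ Z} {R ∈ S | R ⊆ Z} := by
    rw [Set.disjoint_left]; rintro R ⟨_, h1⟩ ⟨_, h2⟩; exact h1 h2
  have h2 : S.ncard = ({R ∈ S | ¬ R ⊆ Z}).ncard + ({R ∈ S | R ⊆ Z}).ncard := by
    conv_lhs => rw [hsplit]
    exact Set.ncard_union_eq hdisj2 (hS.1.subset fun R hR => hR.1)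
      (hS.1.subset fun R hR => hR.1)
  omega

lemma mainrec (q1 q2 : ℕ) (hq1 : 1 < q1) (hq2 : 1 < q2) :
    ∀ n : ℕ, ∀ (a b : ℕ) (xC yC wC hC : ℤ),
    a + b + (wC * hC).toNat ≤ n →
    ∀ S1 S2 : Set (Set (ℤ × ℤ)),
    GoodCut q1 q2 ((q1:ℤ)^a) ((q2:ℤ)^b) (Reg xC yC wC hC) S1 →
    GoodCut q1 q2 ((q1:ℤ)^a) ((q2:ℤ)^b) (Reg xC yC wC hC) S2 →
    (∀ T, GoodCut q1 q2 ((q1:ℤ)^a) ((q2:ℤ)^b) (Reg xC yC wC hC) T → S1.ncard ≤ T.ncard) →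
    (∀ T, GoodCut q1 q2 ((q1:ℤ)^a) ((q2:ℤ)^b) (Reg xC yC wC hC) T → S2.ncard ≤ T.ncard) →
    S1 = S2 := by
  intro n
  induction n using Nat.strong_induction_on with
  | _ n IH =>
  intro a b xC yC wC hC hn S1 S2 hS1 hS2 hm1 hm2
  rcases le_or_gt wC 0 with hwC | hwC
  · have hCe : Reg xC yC wC hC = ∅ := Reg_empty_of_w hwC
    rw [hCe] at hS1 hS2
    rw [goodcut_empty hq1 hq2 hS1, goodcut_empty hq1 hq2 hS2]
  rcases le_or_gt hC 0 with hhC | hhC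
  · have hCe : Reg xC yC wC hC = ∅ := Reg_empty_of_h hhC
    rw [hCe] at hS1 hS2
    rw [goodcut_empty hq1 hq2 hS1, goodcut_empty hq1 hq2 hS2]
  set w : ℤ := (q1:ℤ)^a with hwdef
  set h : ℤ := (q2:ℤ)^b with hhdef
  have hwpos : 0 < w := pow_pos' hq1 a
  have hhpos : 0 < h := pow_pos' hq2 b
  -- the grid lines
  set x0 : ℤ := w * ((xC - 1) / w) + w with hx0def
  set x1 : ℤ := w * ((xC + wC) / w) with hx1def
  set y0 : ℤ := h * ((yC - 1) / h) + h with hy0def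
  set y1 : ℤ := h * ((yC + hC) / h) with hy1def
  obtain ⟨mx0d, mx0l, mx0r⟩ := mfl_spec (xC - 1) hwpos
  obtain ⟨mx1d, mx1l, mx1r⟩ := mfl_spec (xC + wC) hwpos
  obtain ⟨my0d, my0l, my0r⟩ := mfl_spec (yC - 1) hhpos
  obtain ⟨my1d, my1l, my1r⟩ := mfl_spec (yC + hC) hhpos
  have hx0d : w ∣ x0 := dvd_add mx0d dvd_rfl
  have hx1d : w ∣ x1 := mx1d
  have hy0d : h ∣ y0 := dvd_add my0d dvd_rfl
  have hy1d : h ∣ y1 := my1d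
  have hx0ge : xC ≤ x0 := by omega
  have hx0lt : x0 ≤ xC + w - 1 := by omega
  have hy0ge : yC ≤ y0 := by omega
  have hy0lt : y0 ≤ yC + h - 1 := by omega
  have hx1le : x1 ≤ xC + wC := mx1l
  have hy1le : y1 ≤ yC + hC := my1l
  have hx0min : ∀ z, w ∣ z → xC ≤ z → x0 ≤ z := by
    intro z hz hzge
    have := mult_gap hwpos mx0d hz (by omega)
    omega
  have hy0min : ∀ z, h ∣ z → yC ≤ z → y0 ≤ z := by
    intro z hz hzge
    have := mult_gap hhpos my0d hz (by omega)
    omega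
  have hx1max : ∀ z, w ∣ z → z ≤ xC + wC → z ≤ x1 := fun z hz hzle =>
    mfl_greatest hwpos hz hzle
  have hy1max : ∀ z, h ∣ z → z ≤ yC + hC → z ≤ y1 := fun z hz hzle =>
    mfl_greatest hhpos hz hzle
  rcases le_or_gt x1 x0 with hxx | hx01
  · -- no full column: reduce the exponent a
    have ha : 1 ≤ a := by
      by_contra ha0
      push_neg at ha0
      interval_cases a
      · simp only [pow_zero] at hwdef
        have h1 : x0 ≤ xC := by omega
        have h2 : xC + wC ≤ x1 := hx1max _ (hwdef ▸ one_dvd _) le_rfl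
        omega
    have hred : ∀ S, GoodCut q1 q2 w h (Reg xC yC wC hC) S →
        GoodCut q1 q2 ((q1:ℤ)^(a-1)) ((q2:ℤ)^b) (Reg xC yC wC hC) S := by
      intro S hS
      refine ⟨hS.1, ?_, hS.2.2.1, hS.2.2.2⟩
      intro R hR
      obtain ⟨x, y, aa, bb, i, j, h1, h2, h3, h4, h5, h6, h7⟩ := hS.2.1 R hR
      refine ⟨x, y, aa, bb, i, j, h1, h2, h3, h4, h5, ?_, h7⟩
      have hia : i ≤ a := le_of_pow_le' hq1 (h2 ▸ h6)
      have hine : i ≠ a := by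
        rintro rfl
        have hsub := goodcut_region_subset hS hR
        rw [h1] at hsub
        have hbounds := Reg_subset_bounds (h2 ▸ pow_pos' hq1 i) (h3 ▸ pow_pos' hq2 j) hsub
        have hxw : aa = w := by rw [h2, hwdef]
        have e1 : x0 ≤ x := hx0min x (hxw ▸ h4) hbounds.1
        have e2 : x + w ≤ x1 := hx1max _ (dvd_add (hxw ▸ h4) dvd_rfl) (by omega)
        omega
      rw [h2]
      have hq1' : (1:ℤ) ≤ (q1:ℤ) := by exact_mod_cast hq1.le
      exact pow_le_pow_right₀ hq1' (by omega)
    have hwle : (q1:ℤ)^(a-1) ≤ w := by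
      rw [hwdef]
      exact pow_le_pow_right₀ (by exact_mod_cast hq1.le) (by omega)
    exact IH ((a-1) + b + (wC * hC).toNat) (by omega) (a-1) b xC yC wC hC le_rfl S1 S2
      (hred S1 hS1) (hred S2 hS2)
      (fun T hT => hm1 T (goodcut_mono hT hwle le_rfl))
      (fun T hT => hm2 T (goodcut_mono hT hwle le_rfl))
  rcases le_or_gt y1 y0 with hyy | hy01
  · -- no full row: reduce the exponent b
    have hb : 1 ≤ b := by
      by_contra hb0
      push_neg at hb0
      interval_cases b
      · simp only [pow_zero] at hhdef
        have h1 : y0 ≤ yC := by omega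
        have h2 : yC + hC ≤ y1 := hy1max _ (hhdef ▸ one_dvd _) le_rfl
        omega
    have hred : ∀ S, GoodCut q1 q2 w h (Reg xC yC wC hC) S →
        GoodCut q1 q2 ((q1:ℤ)^a) ((q2:ℤ)^(b-1)) (Reg xC yC wC hC) S := by
      intro S hS
      refine ⟨hS.1, ?_, hS.2.2.1, hS.2.2.2⟩
      intro R hR
      obtain ⟨x, y, aa, bb, i, j, h1, h2, h3, h4, h5, h6, h7⟩ := hS.2.1 R hR
      refine ⟨x, y, aa, bb, i, j, h1, h2, h3, h4, h5, h6, ?_⟩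
      have hjb : j ≤ b := le_of_pow_le' hq2 (h3 ▸ h7)
      have hjne : j ≠ b := by
        rintro rfl
        have hsub := goodcut_region_subset hS hR
        rw [h1] at hsub
        have hbounds := Reg_subset_bounds (h2 ▸ pow_pos' hq1 i) (h3 ▸ pow_pos' hq2 j) hsub
        have hyh : bb = h := by rw [h3, hhdef]
        have e1 : y0 ≤ y := hy0min y (hyh ▸ h5) hbounds.2.2.1
        have e2 : y + h ≤ y1 := hy1max _ (dvd_add (hyh ▸ h5) dvd_rfl) (by omega)
        omega
      rw [h3]
      exact pow_le_pow_right₀ (by exact_mod_cast hq2.le) (by omega)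
    have hhle : (q2:ℤ)^(b-1) ≤ h := by
      rw [hhdef]
      exact pow_le_pow_right₀ (by exact_mod_cast hq2.le) (by omega)
    exact IH (a + (b-1) + (wC * hC).toNat) (by omega) a (b-1) xC yC wC hC le_rfl S1 S2
      (hred S1 hS1) (hred S2 hS2)
      (fun T hT => hm1 T (goodcut_mono hT le_rfl hhle))
      (fun T hT => hm2 T (goodcut_mono hT le_rfl hhle))
  · -- full-cell case
    have hx0x1 : x0 + w ≤ x1 := mult_gap hwpos hx0d hx1d hx01
    have hy0y1 : y0 + h ≤ y1 := mult_gap hhpos hy0d hy1d hy01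
    set C : Set (ℤ × ℤ) := Reg xC yC wC hC with hCdef
    set L : Set (ℤ × ℤ) := Reg xC yC (x0 - xC) hC with hLdef
    set Rt : Set (ℤ × ℤ) := Reg x1 yC (xC + wC - x1) hC with hRtdef
    set Bo : Set (ℤ × ℤ) := Reg x0 yC (x1 - x0) (y0 - yC) with hBodef
    set To : Set (ℤ × ℤ) := Reg x0 y1 (x1 - x0) (yC + hC - y1) with hTodef
    set Bl : Set (ℤ × ℤ) := Reg x0 y0 (x1 - x0) (y1 - y0) with hBldef
    set F : Set (Set (ℤ × ℤ)) :=
      {R | ∃ X Y : ℤ, R = Reg X Y w h ∧ w ∣ X ∧ h ∣ Y ∧ Reg X Y w h ⊆ C} with hFdef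
    have hFBl : ∀ R ∈ F, R ⊆ Bl := by
      rintro R ⟨X, Y, rfl, hX, hY, hsub⟩
      rw [hCdef] at hsub
      obtain ⟨e1, e2, e3, e4⟩ := Reg_subset_bounds hwpos hhpos hsub
      have f1 : x0 ≤ X := hx0min X hX e1
      have f2 : X + w ≤ x1 := hx1max (X + w) (dvd_add hX dvd_rfl) (by omega)
      have f3 : y0 ≤ Y := hy0min Y hY e3
      have f4 : Y + h ≤ y1 := hy1max (Y + h) (dvd_add hY dvd_rfl) (by omega)
      rw [hBldef]
      exact Reg_subset f1 (by omega) f3 (by omega)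
    have hUF : ⋃₀ F = Bl := by
      apply Set.Subset.antisymm (Set.sUnion_subset hFBl)
      intro p hp
      rw [hBldef, mem_Reg] at hp
      obtain ⟨mpxd, mpxl, mpxr⟩ := mfl_spec p.1 hwpos
      obtain ⟨mpyd, mpyl, mpyr⟩ := mfl_spec p.2 hhpos
      have f1 : x0 ≤ w * (p.1 / w) := mfl_greatest hwpos hx0d (by omega)
      have f2 : w * (p.1 / w) + w ≤ x1 := mult_gap hwpos mpxd hx1d (by omega)
      have f3 : y0 ≤ h * (p.2 / h) := mfl_greatest hhpos hy0d (by omega)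
      have f4 : h * (p.2 / h) + h ≤ y1 := mult_gap hhpos mpyd hy1d (by omega)
      refine ⟨Reg (w * (p.1 / w)) (h * (p.2 / h)) w h,
        ⟨w * (p.1 / w), h * (p.2 / h), rfl, mpxd, mpyd, ?_⟩, ?_⟩
      · rw [hCdef]
        exact Reg_subset (by omega) (by omega) (by omega) (by omega)
      · rw [mem_Reg]
        constructor <;> constructor <;> omega
    have hFS : ∀ S, GoodCut q1 q2 w h C S →
        (∀ T, GoodCut q1 q2 w h C T → S.ncard ≤ T.ncard) → F ⊆ S := by
      intro S hS hm R hR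
      obtain ⟨X, Y, rfl, hX, hY, hsub⟩ := hR
      exact fullcell_mem hq1 hq2 hS hm hX hY hsub
    have hclass : ∀ S, GoodCut q1 q2 w h C S →
        (∀ T, GoodCut q1 q2 w h C T → S.ncard ≤ T.ncard) →
        ∀ R ∈ S, R ∈ F ∨ R ⊆ L ∨ R ⊆ Rt ∨ R ⊆ Bo ∨ R ⊆ To := by
      intro S hS hm R hR
      obtain ⟨x, y, aa, bb, i, j, rfl, ha2, hb2, hdx, hdy, hle1, hle2⟩ := hS.2.1 R hR
      subst ha2 hb2
      have hapos := pow_pos' hq1 i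
      have hbpos := pow_pos' hq2 j
      have hsub := goodcut_region_subset hS hR
      rw [hCdef] at hsub
      obtain ⟨e1, e2, e3, e4⟩ := Reg_subset_bounds hapos hbpos hsub
      rcases xtri hq1 hle1 hdx hx0d hx1d hx0min hx1max e1 e2 with hx | hx | hx
      · refine Or.inr (Or.inl ?_)
        rw [hLdef]; exact Reg_subset e1 (by omega) e3 (by omega)
      · refine Or.inr (Or.inr (Or.inl ?_))
        rw [hRtdef]; exact Reg_subset hx (by omega) e3 (by omega)
      · rcases xtri hq2 hle2 hdy hy0d hy1d hy0min hy1max e3 e4 with hy | hy | hy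
        · refine Or.inr (Or.inr (Or.inr (Or.inl ?_)))
          rw [hBodef]; exact Reg_subset hx.1 (by omega) e3 (by omega)
        · refine Or.inr (Or.inr (Or.inr (Or.inr ?_)))
          rw [hTodef]; exact Reg_subset hx.1 (by omega) hy (by omega)
        · left
          have hRBl : Reg x y ((q1:ℤ)^i) ((q2:ℤ)^j) ⊆ Bl := by
            rw [hBldef]; exact Reg_subset hx.1 (by omega) hy.1 (by omega)
          obtain ⟨p, hp⟩ := Reg_nonempty hapos hbpos (x := x) (y := y)
          have hpBl : p ∈ ⋃₀ F := by rw [hUF]; exact hRBl hp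
          obtain ⟨Q, hQF, hpQ⟩ := hpBl
          have hQS : Q ∈ S := hFS S hS hm hQF
          by_cases heq : Reg x y ((q1:ℤ)^i) ((q2:ℤ)^j) = Q
          · rw [heq]; exact hQF
          · exfalso
            have hdisj := hS.2.2.1 _ hR Q hQS heq
            have : p ∈ Reg x y ((q1:ℤ)^i) ((q2:ℤ)^j) ∩ Q := ⟨hp, hpQ⟩
            rw [hdisj] at this
            exact this
    -- pairwise disjointness of the zones
    have hzBlL : Bl ∩ L = ∅ := by
      rw [hBldef, hLdef]; ext p
      simp only [Set.mem_inter_iff, mem_Reg, Set.mem_empty_iff_false, iff_false]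
      omega
    have hzBlRt : Bl ∩ Rt = ∅ := by
      rw [hBldef, hRtdef]; ext p
      simp only [Set.mem_inter_iff, mem_Reg, Set.mem_empty_iff_false, iff_false]
      omega
    have hzBlBo : Bl ∩ Bo = ∅ := by
      rw [hBldef, hBodef]; ext p
      simp only [Set.mem_inter_iff, mem_Reg, Set.mem_empty_iff_false, iff_false]
      omega
    have hzBlTo : Bl ∩ To = ∅ := by
      rw [hBldef, hTodef]; ext p
      simp only [Set.mem_inter_iff, mem_Reg, Set.mem_empty_iff_false, iff_false]
      omega
    have hzLRt : L ∩ Rt = ∅ := by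
      rw [hLdef, hRtdef]; ext p
      simp only [Set.mem_inter_iff, mem_Reg, Set.mem_empty_iff_false, iff_false]
      omega
    have hzLBo : L ∩ Bo = ∅ := by
      rw [hLdef, hBodef]; ext p
      simp only [Set.mem_inter_iff, mem_Reg, Set.mem_empty_iff_false, iff_false]
      omega
    have hzLTo : L ∩ To = ∅ := by
      rw [hLdef, hTodef]; ext p
      simp only [Set.mem_inter_iff, mem_Reg, Set.mem_empty_iff_false, iff_false]
      omega
    have hzRtBo : Rt ∩ Bo = ∅ := by
      rw [hRtdef, hBodef]; ext p
      simp only [Set.mem_inter_iff, mem_Reg, Set.mem_empty_iff_false, iff_false]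
      omega
    have hzRtTo : Rt ∩ To = ∅ := by
      rw [hRtdef, hTodef]; ext p
      simp only [Set.mem_inter_iff, mem_Reg, Set.mem_empty_iff_false, iff_false]
      omega
    have hzBoTo : Bo ∩ To = ∅ := by
      rw [hBodef, hTodef]; ext p
      simp only [Set.mem_inter_iff, mem_Reg, Set.mem_empty_iff_false, iff_false]
      omega
    have hLC : L ⊆ C := by
      rw [hLdef, hCdef]; exact Reg_subset (le_refl _) (by omega) (le_refl _) (by omega)
    have hRtC : Rt ⊆ C := by
      rw [hRtdef, hCdef]; exact Reg_subset (by omega) (by omega) (le_refl _) (by omega)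
    have hBoC : Bo ⊆ C := by
      rw [hBodef, hCdef]; exact Reg_subset (by omega) (by omega) (le_refl _) (by omega)
    have hToC : To ⊆ C := by
      rw [hTodef, hCdef]; exact Reg_subset (by omega) (by omega) (by omega) (by omega)
    -- split property
    have hsplitgen : ∀ S, GoodCut q1 q2 w h C S →
        (∀ T, GoodCut q1 q2 w h C T → S.ncard ≤ T.ncard) →
        ∀ Z : Set (ℤ × ℤ), Bl ∩ Z = ∅ →
        (L = Z ∨ L ∩ Z = ∅) → (Rt = Z ∨ Rt ∩ Z = ∅) →
        (Bo = Z ∨ Bo ∩ Z = ∅) → (To = Z ∨ To ∩ Z = ∅) →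
        ∀ R ∈ S, R ⊆ Z ∨ R ∩ Z = ∅ := by
      intro S hS hm Z hBlZ hLZ hRtZ hBoZ hToZ R hR
      have hsub : ∀ (Z' : Set (ℤ × ℤ)), Z' ∩ Z = ∅ → R ⊆ Z' → R ∩ Z = ∅ := by
        intro Z' hZ' hRZ'
        apply Set.eq_empty_of_subset_empty
        rw [← hZ']
        exact Set.inter_subset_inter hRZ' subset_rfl
      rcases hclass S hS hm R hR with hF | hZ' | hZ' | hZ' | hZ'
      · exact Or.inr (hsub Bl hBlZ (hFBl R hF))
      · rcases hLZ with rfl | hLZ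
        · exact Or.inl hZ'
        · exact Or.inr (hsub L hLZ hZ')
      · rcases hRtZ with rfl | hRtZ
        · exact Or.inl hZ'
        · exact Or.inr (hsub Rt hRtZ hZ')
      · rcases hBoZ with rfl | hBoZ
        · exact Or.inl hZ'
        · exact Or.inr (hsub Bo hBoZ hZ')
      · rcases hToZ with rfl | hToZ
        · exact Or.inl hZ'
        · exact Or.inr (hsub To hToZ hZ')
    -- restriction to a zone is a minimal good cut
    have hstripAll : ∀ S, GoodCut q1 q2 w h C S →
        (∀ T, GoodCut q1 q2 w h C T → S.ncard ≤ T.ncard) →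
        ∀ Z : Set (ℤ × ℤ), Z ⊆ C → (∀ R ∈ S, R ⊆ Z ∨ R ∩ Z = ∅) →
        GoodCut q1 q2 w h Z {R ∈ S | R ⊆ Z} ∧
          (∀ T, GoodCut q1 q2 w h Z T → ({R ∈ S | R ⊆ Z}).ncard ≤ T.ncard) := by
      intro S hS hm Z hZC hspl
      have hB : GoodCut q1 q2 w h Z {R ∈ S | R ⊆ Z} := by
        refine ⟨hS.1.subset (fun R hR => hR.1), fun R hR => hS.2.1 R hR.1,
          fun R1 h1 R2 h2 hne => hS.2.2.1 R1 h1.1 R2 h2.1 hne, ?_⟩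
        apply Set.Subset.antisymm (Set.sUnion_subset fun R hR => hR.2)
        intro p hp
        have hpC : p ∈ C := hZC hp
        rw [← hS.2.2.2] at hpC
        obtain ⟨R, hRS, hpR⟩ := hpC
        rcases hspl R hRS with hRZ | hRZ
        · exact ⟨R, ⟨hRS, hRZ⟩, hpR⟩
        · exfalso
          have : p ∈ R ∩ Z := ⟨hpR, hp⟩
          rw [hRZ] at this
          exact this
      have hA : GoodCut q1 q2 w h (C \ Z) {R ∈ S | ¬ R ⊆ Z} := by
        refine ⟨hS.1.subset (fun R hR => hR.1), fun R hR => hS.2.1 R hR.1,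
          fun R1 h1 R2 h2 hne => hS.2.2.1 R1 h1.1 R2 h2.1 hne, ?_⟩
        apply Set.Subset.antisymm
        · apply Set.sUnion_subset
          rintro R ⟨hRS, hnZ⟩ p hpR
          refine ⟨goodcut_region_subset hS hRS hpR, ?_⟩
          rcases hspl R hRS with hRZ | hRZ
          · exact absurd hRZ hnZ
          · intro hpZ
            have : p ∈ R ∩ Z := ⟨hpR, hpZ⟩
            rw [hRZ] at this
            exact this
        · rintro p ⟨hpC, hpZ⟩
          rw [← hS.2.2.2] at hpC
          obtain ⟨R, hRS, hpR⟩ := hpC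
          exact ⟨R, ⟨hRS, fun hRZ => hpZ (hRZ hpR)⟩, hpR⟩
      exact ⟨hB, strip_min hS hm hZC hA hB⟩
    -- minimal good cuts on the four strips
    obtain ⟨hgL1, hmL1⟩ := hstripAll S1 hS1 hm1 L hLC
      (hsplitgen S1 hS1 hm1 L hzBlL (Or.inl rfl) (Or.inr (by rw [Set.inter_comm]; exact hzLRt)) (Or.inr (by rw [Set.inter_comm]; exact hzLBo))
        (Or.inr (by rw [Set.inter_comm]; exact hzLTo)))
    obtain ⟨hgL2, hmL2⟩ := hstripAll S2 hS2 hm2 L hLC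
      (hsplitgen S2 hS2 hm2 L hzBlL (Or.inl rfl) (Or.inr (by rw [Set.inter_comm]; exact hzLRt))
        (Or.inr (by rw [Set.inter_comm]; exact hzLBo))
        (Or.inr (by rw [Set.inter_comm]; exact hzLTo)))
    obtain ⟨hgR1, hmR1⟩ := hstripAll S1 hS1 hm1 Rt hRtC
      (hsplitgen S1 hS1 hm1 Rt hzBlRt (Or.inr hzLRt) (Or.inl rfl)
        (Or.inr (by rw [Set.inter_comm]; exact hzRtBo))
        (Or.inr (by rw [Set.inter_comm]; exact hzRtTo)))
    obtain ⟨hgR2, hmR2⟩ := hstripAll S2 hS2 hm2 Rt hRtC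
      (hsplitgen S2 hS2 hm2 Rt hzBlRt (Or.inr hzLRt) (Or.inl rfl)
        (Or.inr (by rw [Set.inter_comm]; exact hzRtBo))
        (Or.inr (by rw [Set.inter_comm]; exact hzRtTo)))
    obtain ⟨hgB1, hmB1⟩ := hstripAll S1 hS1 hm1 Bo hBoC
      (hsplitgen S1 hS1 hm1 Bo hzBlBo (Or.inr hzLBo) (Or.inr hzRtBo) (Or.inl rfl)
        (Or.inr (by rw [Set.inter_comm]; exact hzBoTo)))
    obtain ⟨hgB2, hmB2⟩ := hstripAll S2 hS2 hm2 Bo hBoC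
      (hsplitgen S2 hS2 hm2 Bo hzBlBo (Or.inr hzLBo) (Or.inr hzRtBo) (Or.inl rfl)
        (Or.inr (by rw [Set.inter_comm]; exact hzBoTo)))
    obtain ⟨hgT1, hmT1⟩ := hstripAll S1 hS1 hm1 To hToC
      (hsplitgen S1 hS1 hm1 To hzBlTo (Or.inr hzLTo) (Or.inr hzRtTo) (Or.inr hzBoTo)
        (Or.inl rfl))
    obtain ⟨hgT2, hmT2⟩ := hstripAll S2 hS2 hm2 To hToC
      (hsplitgen S2 hS2 hm2 To hzBlTo (Or.inr hzLTo) (Or.inr hzRtTo) (Or.inr hzBoTo)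
        (Or.inl rfl))
    -- measure bounds for the four strips
    have harea : 0 < wC * hC := mul_pos hwC hhC
    have hmesL : a + b + ((x0 - xC) * hC).toNat < n := by
      have e1 : (x0 - xC) * hC ≤ (wC - w) * hC :=
        mul_le_mul_of_nonneg_right (by omega) hhC.le
      have e2 : (wC - w) * hC = wC * hC - w * hC := by ring
      have e3 : 0 < w * hC := mul_pos hwpos hhC
      have e4 : 0 ≤ (x0 - xC) * hC := mul_nonneg (by omega) hhC.le
      omega
    have hmesR : a + b + ((xC + wC - x1) * hC).toNat < n := by
      have e1 : (xC + wC - x1) * hC ≤ (wC - w) * hC :=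
        mul_le_mul_of_nonneg_right (by omega) hhC.le
      have e2 : (wC - w) * hC = wC * hC - w * hC := by ring
      have e3 : 0 < w * hC := mul_pos hwpos hhC
      have e4 : 0 ≤ (xC + wC - x1) * hC := mul_nonneg (by omega) hhC.le
      omega
    have hmesB : a + b + ((x1 - x0) * (y0 - yC)).toNat < n := by
      have e1 : (x1 - x0) * (y0 - yC) ≤ wC * (hC - h) :=
        mul_le_mul (by omega) (by omega) (by omega) (by omega)
      have e2 : wC * (hC - h) = wC * hC - wC * h := by ring
      have e3 : 0 < wC * h := mul_pos hwC hhpos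
      have e4 : 0 ≤ (x1 - x0) * (y0 - yC) := mul_nonneg (by omega) (by omega)
      omega
    have hmesT : a + b + ((x1 - x0) * (yC + hC - y1)).toNat < n := by
      have e1 : (x1 - x0) * (yC + hC - y1) ≤ wC * (hC - h) :=
        mul_le_mul (by omega) (by omega) (by omega) (by omega)
      have e2 : wC * (hC - h) = wC * hC - wC * h := by ring
      have e3 : 0 < wC * h := mul_pos hwC hhpos
      have e4 : 0 ≤ (x1 - x0) * (yC + hC - y1) := mul_nonneg (by omega) (by omega)
      omega
    -- the strips agree by induction
    have hL12 : {R ∈ S1 | R ⊆ L} = {R ∈ S2 | R ⊆ L} :=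
      IH _ hmesL a b xC yC (x0 - xC) hC le_rfl _ _ hgL1 hgL2 hmL1 hmL2
    have hR12 : {R ∈ S1 | R ⊆ Rt} = {R ∈ S2 | R ⊆ Rt} :=
      IH _ hmesR a b x1 yC (xC + wC - x1) hC le_rfl _ _ hgR1 hgR2 hmR1 hmR2
    have hB12 : {R ∈ S1 | R ⊆ Bo} = {R ∈ S2 | R ⊆ Bo} :=
      IH _ hmesB a b x0 yC (x1 - x0) (y0 - yC) le_rfl _ _ hgB1 hgB2 hmB1 hmB2
    have hT12 : {R ∈ S1 | R ⊆ To} = {R ∈ S2 | R ⊆ To} :=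
      IH _ hmesT a b x0 y1 (x1 - x0) (yC + hC - y1) le_rfl _ _ hgT1 hgT2 hmT1 hmT2
    -- assemble
    have hdec : ∀ S, GoodCut q1 q2 w h C S →
        (∀ T, GoodCut q1 q2 w h C T → S.ncard ≤ T.ncard) →
        S = F ∪ {R ∈ S | R ⊆ L} ∪ {R ∈ S | R ⊆ Rt} ∪ {R ∈ S | R ⊆ Bo} ∪ {R ∈ S | R ⊆ To} := by
      intro S hS hm
      apply Set.Subset.antisymm
      · intro R hR
        simp only [Set.mem_union, Set.mem_setOf_eq]
        rcases hclass S hS hm R hR with hF | hZ | hZ | hZ | hZ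
        · tauto
        · tauto
        · tauto
        · tauto
        · tauto
      · intro R hR
        simp only [Set.mem_union, Set.mem_setOf_eq] at hR
        rcases hR with ((((hF | hZ) | hZ) | hZ) | hZ)
        · exact hFS S hS hm hF
        · exact hZ.1
        · exact hZ.1
        · exact hZ.1
        · exact hZ.1
    rw [hdec S1 hS1 hm1, hdec S2 hS2 hm2, hL12, hR12, hB12, hT12]

/-- for any container `C = [xC, xC+wC) × [yC, yC+hC)` and any regular
size `[w,h]`, a smallest (in cardinality) set of pairwise non-overlapping regular
aligned containers of size `⪯ [w,h]` whose union is `C` is unique if it exists: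
the cutting function `σ(C,[w,h])` is well-defined. -/
theorem stmt9 (q1 q2 : ℕ) (hq1 : 1 < q1) (hq2 : 1 < q2)
    (a b : ℕ) (w h : ℤ) (hw : w = (q1 : ℤ) ^ a) (hh : h = (q2 : ℤ) ^ b)
    (xC yC wC hC : ℤ) (hwC : 0 < wC) (hhC : 0 < hC)
    (S1 S2 : Set (Set (ℤ × ℤ)))
    (h1 : GoodCut q1 q2 w h (Reg xC yC wC hC) S1)
    (h2 : GoodCut q1 q2 w h (Reg xC yC wC hC) S2)
    (hmin1 : ∀ T, GoodCut q1 q2 w h (Reg xC yC wC hC) T → S1.ncard ≤ T.ncard)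
    (hmin2 : ∀ T, GoodCut q1 q2 w h (Reg xC yC wC hC) T → S2.ncard ≤ T.ncard) :
    S1 = S2 := by
  subst hw hh
  exact mainrec q1 q2 hq1 hq2 (a + b + (wC * hC).toNat) a b xC yC wC hC le_rfl S1 S2
    h1 h2 hmin1 hmin2
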